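/- Let Ω be a nonempty bounded open convex subset of ℝ³, let x ∈ Ω with d₀ = dist(x,∂Ω) > 0, let ζ₁, ζ₂ ∈ ℝ³∖{0}, set P₁ = p(x,ζ₁), P₂ = p(x,ζ₂), and let θ be the angle between ζ₁ and ζ₂. Then there is a constant C₇ depending only on Ω such that |P₁ − P₂| ≤ C₇(1+d₀⁻¹)θ and | |x−P₁| − |x−P₂| | ≤ C₇(1+d₀⁻¹)θ. -/

import Mathlib

open MeasureTheory Real Set
open scoped ENNReal NNReal

noncomputable section

/-- Three-dimensional Euclidean space. -/
abbrev E3 : Type := EuclideanSpace ℝ (Fin 3)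

/-- Backward exit time: `τ₋(x,ζ) = sup{t ≥ 0 : x - sζ ∈ Ω for all s ∈ [0,t)}`. -/
def tauMinus (Ω : Set E3) (x ζ : E3) : ℝ :=
  sSup {t : ℝ | 0 ≤ t ∧ ∀ s ∈ Set.Ico (0 : ℝ) t, x - s • ζ ∈ Ω}

/-- Backward exit point: `p(x,ζ) = x - τ₋(x,ζ) ζ`. -/
def exitPoint (Ω : Set E3) (x ζ : E3) : E3 := x - tauMinus Ω x ζ • ζ

/-- The incoming boundary set `Γ₋`. -/
def GammaMinus (Ω : Set E3) : Set (E3 × E3) :=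
  {z | z.1 ∈ frontier Ω ∧ ∃ t : ℝ, 0 < t ∧ z.1 + t • z.2 ∈ Ω}

/-- Collision frequency `ν(ζ) = β₀ ∫ e^{-|η|²} |η-ζ|^γ dη`. -/
def nu (γ β₀ : ℝ) (ζ : E3) : ℝ :=
  β₀ * ∫ η : E3, Real.exp (-‖η‖ ^ 2) * ‖η - ζ‖ ^ γ

/-- The Grad-type pointwise bound (1.9) on the collision kernel `k`. -/
def KernelBound (γ δ C₁ : ℝ) (k : E3 → E3 → ℝ) : Prop :=
  ∀ ζ ζs : E3, ζ ≠ ζs →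
    |k ζ ζs| ≤ C₁ * ‖ζ - ζs‖⁻¹ * (1 + ‖ζ‖ + ‖ζs‖) ^ (-(1 - γ)) *
      Real.exp (-((1 - δ) / 4) *
        (‖ζ - ζs‖ ^ 2 + ((‖ζ‖ ^ 2 - ‖ζs‖ ^ 2) / ‖ζ - ζs‖) ^ 2))

/-- The gradient bound (1.10) on the collision kernel `k` (first-variable gradient),
together with differentiability of `k (·, ζ⁎)`. -/
def KernelGradBound (γ δ C₂ : ℝ) (k : E3 → E3 → ℝ) : Prop :=
  (∀ ζs : E3, Differentiable ℝ fun ζ => k ζ ζs) ∧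
  ∀ ζ ζs : E3, ζ ≠ ζs →
    ‖fderiv ℝ (fun w => k w ζs) ζ‖ ≤
      C₂ * (1 + ‖ζ‖) * (‖ζ - ζs‖ ^ 2)⁻¹ * (1 + ‖ζ‖ + ‖ζs‖) ^ (-(1 - γ)) *
        Real.exp (-((1 - δ) / 4) *
          (‖ζ - ζs‖ ^ 2 + ((‖ζ‖ ^ 2 - ‖ζs‖ ^ 2) / ‖ζ - ζs‖) ^ 2))

/-- The integral operator `K(f)(x,ζ) = ∫ k(ζ,ζ⁎) f(x,ζ⁎) dζ⁎`. -/
def Kop (k : E3 → E3 → ℝ) (f : E3 → E3 → ℝ) (x ζ : E3) : ℝ :=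
  ∫ ζs : E3, k ζ ζs * f x ζs

/-- `f` is a mild solution of the stationary linearized Boltzmann equation:
it satisfies the exponential (Duhamel) integral form along backward characteristics,
a.e. on `Ω × ℝ³`. -/
def MildSolution (Ω : Set E3) (γ β₀ : ℝ) (k f : E3 → E3 → ℝ) : Prop :=
  ∀ᵐ z : E3 × E3, z.1 ∈ Ω →
    f z.1 z.2 =
      f (exitPoint Ω z.1 z.2) z.2 * Real.exp (-(nu γ β₀ z.2) * tauMinus Ω z.1 z.2) +
      ∫ s in (0 : ℝ)..(tauMinus Ω z.1 z.2),
        Real.exp (-(nu γ β₀ z.2) * s) * Kop k f (z.1 - s • z.2) z.2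

/-- The function `G` from the mixture lemma, written as an integral over space
and speed:
`G(x₀,ζ) = ∫₀^∞ ∫_Ω k(ζ, ρ(x₀−y)/|x₀−y|) e^{−ν(ρ)|x₀−y|/ρ} K(f)(y, ρ(x₀−y)/|x₀−y|) ρ|x₀−y|⁻² dy dρ`. -/
def Gfun (Ω : Set E3) (γ β₀ : ℝ) (k f : E3 → E3 → ℝ) (x₀ ζ : E3) : ℝ :=
  ∫ ρ in Set.Ioi (0 : ℝ), ∫ y in Ω,
    k ζ ((ρ / ‖x₀ - y‖) • (x₀ - y)) *
      Real.exp (-(nu γ β₀ ((ρ / ‖x₀ - y‖) • (x₀ - y))) * (‖x₀ - y‖ / ρ)) *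
      Kop k f y ((ρ / ‖x₀ - y‖) • (x₀ - y)) * (ρ / ‖x₀ - y‖ ^ 2)

/-- The term `III(x,ζ) = ∫₀^{τ₋(x,ζ)} e^{−ν(ζ)s} G(x−ζs, ζ) ds`. -/
def IIIfun (Ω : Set E3) (γ β₀ : ℝ) (k f : E3 → E3 → ℝ) (x ζ : E3) : ℝ :=
  ∫ s in (0 : ℝ)..(tauMinus Ω x ζ),
    Real.exp (-(nu γ β₀ ζ) * s) * Gfun Ω γ β₀ k f (x - s • ζ) ζ

/-- The damped transport of boundary data: `I(x,ζ) = g(p(x,ζ),ζ) e^{−ν(ζ)τ₋(x,ζ)}`. -/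
def Ifun (Ω : Set E3) (γ β₀ : ℝ) (g : E3 → E3 → ℝ) (x ζ : E3) : ℝ :=
  g (exitPoint Ω x ζ) ζ * Real.exp (-(nu γ β₀ ζ) * tauMinus Ω x ζ)

/-- The twice-iterated boundary term
`II(x,ζ) = ∫₀^{τ₋(x,ζ)} ∫ e^{−ν(ζ)s} k(ζ,ζ′) e^{−ν(ζ′)τ₋(x−ζs,ζ′)} g(p(x−ζs,ζ′),ζ′) dζ′ ds`. -/
def IIfun (Ω : Set E3) (γ β₀ : ℝ) (k g : E3 → E3 → ℝ) (x ζ : E3) : ℝ :=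
  ∫ s in (0 : ℝ)..(tauMinus Ω x ζ), ∫ ζ' : E3,
    Real.exp (-(nu γ β₀ ζ) * s) * k ζ ζ' *
      Real.exp (-(nu γ β₀ ζ') * tauMinus Ω (x - s • ζ) ζ') *
      g (exitPoint Ω (x - s • ζ) ζ') ζ'

private lemma chord_le_angle {ω₁ ω₂ : E3} (h₁ : ‖ω₁‖ = 1) (h₂ : ‖ω₂‖ = 1) :
    ‖ω₁ - ω₂‖ ≤ InnerProductGeometry.angle ω₁ ω₂ := by
  set θ := InnerProductGeometry.angle ω₁ ω₂ with hθdef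
  have hθ0 : 0 ≤ θ := InnerProductGeometry.angle_nonneg _ _
  have hcos := InnerProductGeometry.cos_angle ω₁ ω₂
  rw [h₁, h₂] at hcos
  have hinner : inner ℝ ω₁ ω₂ = Real.cos θ := by
    rw [hcos]; norm_num
  have hsq : ‖ω₁ - ω₂‖ ^ 2 = 2 - 2 * Real.cos θ := by
    rw [norm_sub_sq_real, h₁, h₂, hinner]; ring
  have hcosb : 1 - θ ^ 2 / 2 ≤ Real.cos θ := Real.one_sub_sq_div_two_le_cos
  nlinarith [norm_nonneg (ω₁ - ω₂), sq_nonneg (‖ω₁ - ω₂‖ - θ)]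

private lemma tau_spec {Ω : Set E3} (hop : IsOpen Ω) {x ζ : E3} (hx : x ∈ Ω) (hζ : ζ ≠ 0)
    {R : ℝ} (hR : Ω ⊆ Metric.ball 0 R) :
    0 < tauMinus Ω x ζ ∧
      (∀ s : ℝ, 0 ≤ s → s < tauMinus Ω x ζ → x - s • ζ ∈ Ω) ∧
      x - tauMinus Ω x ζ • ζ ∉ Ω ∧ tauMinus Ω x ζ * ‖ζ‖ ≤ 2 * R := by
  have hζn : 0 < ‖ζ‖ := norm_pos_iff.mpr hζ
  set S : Set ℝ := {t : ℝ | 0 ≤ t ∧ ∀ s ∈ Set.Ico (0 : ℝ) t, x - s • ζ ∈ Ω} with hSdef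
  have hτdef : tauMinus Ω x ζ = sSup S := rfl
  have hS0 : (0 : ℝ) ∈ S := ⟨le_refl 0, fun s hs => absurd hs.2 (not_lt.mpr hs.1)⟩
  have hxR : ‖x‖ < R := by have := hR hx; rwa [Metric.mem_ball, dist_zero_right] at this
  have hRpos : 0 < R := lt_of_le_of_lt (norm_nonneg x) hxR
  have hub : ∀ t ∈ S, t ≤ 2 * R / ‖ζ‖ := by
    intro t ht
    by_contra hc
    push_neg at hc
    have hB : 0 < 2 * R / ‖ζ‖ := by positivity
    set s := (2 * R / ‖ζ‖ + t) / 2 with hs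
    have hs1 : 2 * R / ‖ζ‖ < s := by rw [hs]; linarith
    have hs2 : s < t := by rw [hs]; linarith
    have hsm : x - s • ζ ∈ Ω := ht.2 s ⟨by linarith, hs2⟩
    have h1 : ‖x - s • ζ‖ < R := by
      have := hR hsm; rwa [Metric.mem_ball, dist_zero_right] at this
    have h3 : s * ‖ζ‖ ≤ ‖x - s • ζ‖ + ‖x‖ := by
      have he : s • ζ = x - (x - s • ζ) := by abel
      calc s * ‖ζ‖ = ‖s • ζ‖ := by
            rw [norm_smul, Real.norm_eq_abs, abs_of_nonneg (by linarith : 0 ≤ s)]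
        _ = ‖x - (x - s • ζ)‖ := by rw [← he]
        _ ≤ ‖x‖ + ‖x - s • ζ‖ := norm_sub_le _ _
        _ = ‖x - s • ζ‖ + ‖x‖ := by ring
    have h4 : 2 * R < s * ‖ζ‖ := (div_lt_iff₀ hζn).mp hs1
    linarith
  have hbdd : BddAbove S := ⟨2 * R / ‖ζ‖, hub⟩
  have hseg : ∀ s : ℝ, 0 ≤ s → s < tauMinus Ω x ζ → x - s • ζ ∈ Ω := by
    intro s hs0 hsτ
    rw [hτdef] at hsτ
    obtain ⟨t, htS, hst⟩ := exists_lt_of_lt_csSup ⟨0, hS0⟩ hsτ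
    exact htS.2 s ⟨hs0, hst⟩
  obtain ⟨δ, hδpos, hball⟩ := Metric.isOpen_iff.mp hop x hx
  have hδS : δ / ‖ζ‖ ∈ S := by
    refine ⟨by positivity, fun s hs => hball ?_⟩
    rw [Metric.mem_ball, dist_eq_norm]
    have : x - s • ζ - x = -(s • ζ) := by abel
    rw [this, norm_neg, norm_smul, Real.norm_eq_abs, abs_of_nonneg hs.1]
    exact (lt_div_iff₀ hζn).mp hs.2
  have hτpos : 0 < tauMinus Ω x ζ :=
    lt_of_lt_of_le (by positivity) (hτdef ▸ le_csSup hbdd hδS)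
  have hnotin : x - tauMinus Ω x ζ • ζ ∉ Ω := by
    intro hmem
    obtain ⟨δ', hδ'pos, hball'⟩ := Metric.isOpen_iff.mp hop _ hmem
    set τ := tauMinus Ω x ζ with hτ
    have hτS : τ + δ' / ‖ζ‖ ∈ S := by
      refine ⟨by positivity, fun s hs => ?_⟩
      rcases lt_or_ge s τ with h | h
      · exact hseg s hs.1 h
      · apply hball'
        rw [Metric.mem_ball, dist_eq_norm]
        have he : x - s • ζ - (x - τ • ζ) = (τ - s) • ζ := by
          rw [sub_smul]; abel
        rw [he, norm_smul, Real.norm_eq_abs, abs_of_nonpos (by linarith : τ - s ≤ 0)]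
        have : s - τ < δ' / ‖ζ‖ := by linarith [hs.2]
        calc -(τ - s) * ‖ζ‖ = (s - τ) * ‖ζ‖ := by ring
          _ < δ' := (lt_div_iff₀ hζn).mp this
    have := le_csSup hbdd hτS
    rw [← hτdef] at this
    have hpos : 0 < δ' / ‖ζ‖ := by positivity
    linarith [this]
  have hτle : tauMinus Ω x ζ ≤ 2 * R / ‖ζ‖ := hτdef ▸ csSup_le ⟨0, hS0⟩ hub
  exact ⟨hτpos, hseg, hnotin, (le_div_iff₀ hζn).mp hτle⟩

private lemma oneSided {Ω : Set E3} (hconv : Convex ℝ Ω) {x : E3} {d₀ R : ℝ}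
    (hd₀ : 0 < d₀) (hball : Metric.ball x d₀ ⊆ Ω) (hR : 0 < R)
    {ω₁ ω₂ : E3} {r₁ r₂ : ℝ}
    (hr₂pos : 0 < r₂) (hr₁R : r₁ ≤ 2 * R) (hr₂R : r₂ ≤ 2 * R)
    (hmem : ∀ t : ℝ, 0 ≤ t → t < r₁ → x - t • ω₁ ∈ Ω)
    (hnot : x - r₂ • ω₂ ∉ Ω) :
    r₁ ≤ r₂ + 4 * R ^ 2 / d₀ * ‖ω₁ - ω₂‖ := by
  by_contra hc
  push_neg at hc
  set Δ := ‖ω₁ - ω₂‖ with hΔ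
  have hΔ0 : 0 ≤ Δ := norm_nonneg _
  have hC0 : 0 ≤ 4 * R ^ 2 / d₀ * Δ := by positivity
  set t := (r₂ + 4 * R ^ 2 / d₀ * Δ + r₁) / 2 with ht
  have ht1 : r₂ + 4 * R ^ 2 / d₀ * Δ < t := by rw [ht]; linarith
  have ht2 : t < r₁ := by rw [ht]; linarith
  have htpos : 0 < t := by linarith
  have htr₂ : r₂ < t := by linarith
  have hz : x - t • ω₁ ∈ Ω := hmem t htpos.le ht2
  -- convex combination: y = (r₂/t) • z + (1 - r₂/t) • w
  set lam := r₂ / t with hlam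
  have hlam0 : 0 < lam := by positivity
  have hlam1 : lam < 1 := (div_lt_one htpos).mpr htr₂
  set w := x + (1 - lam)⁻¹ • (r₂ • (ω₁ - ω₂)) with hw
  have hwball : w ∈ Metric.ball x d₀ := by
    rw [Metric.mem_ball, dist_eq_norm]
    have he : w - x = (1 - lam)⁻¹ • (r₂ • (ω₁ - ω₂)) := by rw [hw]; abel
    have h1lpos : (0:ℝ) < 1 - lam := by linarith
    rw [he, norm_smul, norm_smul, Real.norm_eq_abs, Real.norm_eq_abs,
      abs_of_pos (inv_pos.mpr h1lpos), abs_of_pos hr₂pos]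
    rw [inv_mul_lt_iff₀ h1lpos]
    have h1 : 1 - lam = (t - r₂) / t := by rw [hlam]; field_simp
    have h2 : 4 * R ^ 2 / d₀ * Δ < t - r₂ := by linarith
    have h3 : 4 * R ^ 2 * Δ < (t - r₂) * d₀ := by
      have hm := mul_lt_mul_of_pos_right h2 hd₀
      calc 4 * R ^ 2 * Δ = 4 * R ^ 2 / d₀ * Δ * d₀ := by field_simp
        _ < (t - r₂) * d₀ := hm
    have h5 : r₂ * t ≤ 4 * R ^ 2 := by nlinarith
    have h6 : r₂ * t * Δ ≤ 4 * R ^ 2 * Δ := mul_le_mul_of_nonneg_right h5 hΔ0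
    rw [h1, div_mul_eq_mul_div, lt_div_iff₀ htpos]
    nlinarith
  have hwΩ : w ∈ Ω := hball hwball
  have hcomb : lam • (x - t • ω₁) + (1 - lam) • w = x - r₂ • ω₂ := by
    have hlt : lam * t = r₂ := by rw [hlam]; field_simp
    have h1l : (1 - lam) • ((1 - lam)⁻¹ • (r₂ • (ω₁ - ω₂))) = r₂ • (ω₁ - ω₂) := by
      rw [smul_smul, mul_inv_cancel₀ (by linarith : (1:ℝ) - lam ≠ 0), one_smul]
    rw [hw, smul_add, h1l, smul_sub, smul_smul, hlt]
    module
  have : x - r₂ • ω₂ ∈ Ω := by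
    rw [← hcomb]
    exact hconv hz hwΩ hlam0.le (by linarith) (by ring)
  exact hnot this

/-- Continuity of the exit point and exit distance in the velocity direction
(Proposition 3.3). -/
theorem stmt_8 (Ω : Set E3) (hne : Ω.Nonempty) (hbd : Bornology.IsBounded Ω)
    (hop : IsOpen Ω) (hconv : Convex ℝ Ω) :
    ∃ C₇ : ℝ, 0 < C₇ ∧ ∀ x ∈ Ω, 0 < Metric.infDist x (frontier Ω) →
      ∀ ζ₁ ζ₂ : E3, ζ₁ ≠ 0 → ζ₂ ≠ 0 →
        ‖exitPoint Ω x ζ₁ - exitPoint Ω x ζ₂‖ ≤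
          C₇ * (1 + (Metric.infDist x (frontier Ω))⁻¹) *
            InnerProductGeometry.angle ζ₁ ζ₂ ∧
        |‖x - exitPoint Ω x ζ₁‖ - ‖x - exitPoint Ω x ζ₂‖| ≤
          C₇ * (1 + (Metric.infDist x (frontier Ω))⁻¹) *
            InnerProductGeometry.angle ζ₁ ζ₂ := by
  obtain ⟨R₀, hR₀⟩ := (Metric.isBounded_iff_subset_ball (0 : E3)).mp hbd
  set R := max R₀ 1 with hRdef
  have hR1 : (1:ℝ) ≤ R := le_max_right _ _
  have hRpos : (0:ℝ) < R := by linarith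
  have hR : Ω ⊆ Metric.ball 0 R :=
    hR₀.trans (Metric.ball_subset_ball (le_max_left _ _))
  refine ⟨4 * R ^ 2 + 2 * R + 1, by positivity, ?_⟩
  intro x hx hd₀ ζ₁ ζ₂ hζ₁ hζ₂
  set d₀ := Metric.infDist x (frontier Ω) with hd₀def
  -- ball x d₀ ⊆ Ω
  have hΩuniv : Ω ≠ Set.univ := by
    intro h
    have h0 : (0:ℝ) < Metric.infDist x (frontier Ω) := hd₀
    rw [h, frontier_univ, Metric.infDist_empty] at h0
    exact lt_irrefl _ h0
  obtain ⟨y, hyf, hyd⟩ := exists_mem_frontier_infDist_compl_eq_dist hx hΩuniv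
  have hd₀le : d₀ ≤ Metric.infDist x Ωᶜ := by
    rw [hyd]; exact Metric.infDist_le_dist_of_mem hyf
  have hball : Metric.ball x d₀ ⊆ Ω :=
    (Metric.ball_subset_ball hd₀le).trans Metric.ball_infDist_compl_subset
  -- tau specs
  obtain ⟨hτ₁pos, hseg₁, hnot₁, hτ₁le⟩ := tau_spec hop hx hζ₁ hR
  obtain ⟨hτ₂pos, hseg₂, hnot₂, hτ₂le⟩ := tau_spec hop hx hζ₂ hR
  have hζ₁n : (0:ℝ) < ‖ζ₁‖ := norm_pos_iff.mpr hζ₁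
  have hζ₂n : (0:ℝ) < ‖ζ₂‖ := norm_pos_iff.mpr hζ₂
  set ω₁ := ‖ζ₁‖⁻¹ • ζ₁ with hω₁def
  set ω₂ := ‖ζ₂‖⁻¹ • ζ₂ with hω₂def
  have hω₁ : ‖ω₁‖ = 1 := by
    rw [hω₁def, norm_smul, norm_inv, norm_norm, inv_mul_cancel₀ hζ₁n.ne']
  have hω₂ : ‖ω₂‖ = 1 := by
    rw [hω₂def, norm_smul, norm_inv, norm_norm, inv_mul_cancel₀ hζ₂n.ne']
  set r₁ := tauMinus Ω x ζ₁ * ‖ζ₁‖ with hr₁def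
  set r₂ := tauMinus Ω x ζ₂ * ‖ζ₂‖ with hr₂def
  have hr₁pos : 0 < r₁ := mul_pos hτ₁pos hζ₁n
  have hr₂pos : 0 < r₂ := mul_pos hτ₂pos hζ₂n
  have hrw₁ : r₁ • ω₁ = tauMinus Ω x ζ₁ • ζ₁ := by
    rw [hr₁def, hω₁def, smul_smul, mul_assoc, mul_inv_cancel₀ hζ₁n.ne', mul_one]
  have hrw₂ : r₂ • ω₂ = tauMinus Ω x ζ₂ • ζ₂ := by
    rw [hr₂def, hω₂def, smul_smul, mul_assoc, mul_inv_cancel₀ hζ₂n.ne', mul_one]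
  have hmem₁ : ∀ t : ℝ, 0 ≤ t → t < r₁ → x - t • ω₁ ∈ Ω := by
    intro t ht0 htr
    have he : t • ω₁ = (t / ‖ζ₁‖) • ζ₁ := by
      rw [hω₁def, smul_smul, div_eq_mul_inv]
    rw [he]
    exact hseg₁ _ (by positivity) ((div_lt_iff₀ hζ₁n).mpr htr)
  have hmem₂ : ∀ t : ℝ, 0 ≤ t → t < r₂ → x - t • ω₂ ∈ Ω := by
    intro t ht0 htr
    have he : t • ω₂ = (t / ‖ζ₂‖) • ζ₂ := by
      rw [hω₂def, smul_smul, div_eq_mul_inv]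
    rw [he]
    exact hseg₂ _ (by positivity) ((div_lt_iff₀ hζ₂n).mpr htr)
  have hnot₁' : x - r₁ • ω₁ ∉ Ω := by rw [hrw₁]; exact hnot₁
  have hnot₂' : x - r₂ • ω₂ ∉ Ω := by rw [hrw₂]; exact hnot₂
  have hP₁ : exitPoint Ω x ζ₁ = x - r₁ • ω₁ := by rw [exitPoint, hrw₁]
  have hP₂ : exitPoint Ω x ζ₂ = x - r₂ • ω₂ := by rw [exitPoint, hrw₂]
  -- one-sided bounds
  have h12 := oneSided hconv hd₀ hball hRpos hr₂pos hτ₁le hτ₂le hmem₁ hnot₂'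
  have h21 := oneSided hconv hd₀ hball hRpos hr₁pos hτ₂le hτ₁le hmem₂ hnot₁'
  have hΔrev : ‖ω₂ - ω₁‖ = ‖ω₁ - ω₂‖ := norm_sub_rev _ _
  set Δ := ‖ω₁ - ω₂‖ with hΔdef
  have hΔ0 : 0 ≤ Δ := norm_nonneg _
  rw [hΔrev] at h21
  have habs : |r₁ - r₂| ≤ 4 * R ^ 2 / d₀ * Δ := abs_sub_le_iff.mpr ⟨by linarith, by linarith⟩
  -- angle
  set θ := InnerProductGeometry.angle ζ₁ ζ₂ with hθdef
  have hθ0 : 0 ≤ θ := InnerProductGeometry.angle_nonneg _ _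
  have hangle : InnerProductGeometry.angle ω₁ ω₂ = θ := by
    rw [hω₁def, hω₂def, InnerProductGeometry.angle_smul_left_of_pos _ _ (inv_pos.mpr hζ₁n),
      InnerProductGeometry.angle_smul_right_of_pos _ _ (inv_pos.mpr hζ₂n)]
  have hΔθ : Δ ≤ θ := by rw [hΔdef, ← hangle]; exact chord_le_angle hω₁ hω₂
  have hd₀inv : (0:ℝ) < d₀⁻¹ := inv_pos.mpr hd₀
  have hKeq : 4 * R ^ 2 / d₀ = 4 * R ^ 2 * d₀⁻¹ := div_eq_mul_inv _ _
  have hfinal : 2 * R + 4 * R ^ 2 / d₀ ≤ (4 * R ^ 2 + 2 * R + 1) * (1 + d₀⁻¹) := by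
    rw [hKeq]; nlinarith [sq_nonneg R]
  have hmain : (2 * R + 4 * R ^ 2 / d₀) * Δ ≤ (4 * R ^ 2 + 2 * R + 1) * (1 + d₀⁻¹) * θ := by
    calc (2 * R + 4 * R ^ 2 / d₀) * Δ ≤ (2 * R + 4 * R ^ 2 / d₀) * θ := by
          apply mul_le_mul_of_nonneg_left hΔθ; positivity
      _ ≤ (4 * R ^ 2 + 2 * R + 1) * (1 + d₀⁻¹) * θ :=
          mul_le_mul_of_nonneg_right hfinal hθ0
  constructor
  · -- exit point estimate
    have hdiff : exitPoint Ω x ζ₁ - exitPoint Ω x ζ₂ = r₂ • (ω₂ - ω₁) + (r₂ - r₁) • ω₁ := by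
      rw [hP₁, hP₂]; module
    have hnorm : ‖exitPoint Ω x ζ₁ - exitPoint Ω x ζ₂‖ ≤ r₂ * Δ + |r₁ - r₂| := by
      rw [hdiff]
      calc ‖r₂ • (ω₂ - ω₁) + (r₂ - r₁) • ω₁‖ ≤ ‖r₂ • (ω₂ - ω₁)‖ + ‖(r₂ - r₁) • ω₁‖ :=
            norm_add_le _ _
        _ = r₂ * Δ + |r₁ - r₂| := by
            rw [norm_smul, norm_smul, hω₁, Real.norm_eq_abs, Real.norm_eq_abs,
              abs_of_pos hr₂pos, hΔrev, mul_one, abs_sub_comm]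
    have hr₂Δ : r₂ * Δ ≤ 2 * R * Δ := by
      apply mul_le_mul_of_nonneg_right _ hΔ0
      calc r₂ = tauMinus Ω x ζ₂ * ‖ζ₂‖ := hr₂def
        _ ≤ 2 * R := hτ₂le
    calc ‖exitPoint Ω x ζ₁ - exitPoint Ω x ζ₂‖ ≤ r₂ * Δ + |r₁ - r₂| := hnorm
      _ ≤ 2 * R * Δ + 4 * R ^ 2 / d₀ * Δ := by linarith
      _ = (2 * R + 4 * R ^ 2 / d₀) * Δ := by ring
      _ ≤ _ := hmain
  · -- exit distance estimate
    have hn₁ : ‖x - exitPoint Ω x ζ₁‖ = r₁ := by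
      rw [hP₁]
      have : x - (x - r₁ • ω₁) = r₁ • ω₁ := by abel
      rw [this, norm_smul, hω₁, Real.norm_eq_abs, abs_of_pos hr₁pos, mul_one]
    have hn₂ : ‖x - exitPoint Ω x ζ₂‖ = r₂ := by
      rw [hP₂]
      have : x - (x - r₂ • ω₂) = r₂ • ω₂ := by abel
      rw [this, norm_smul, hω₂, Real.norm_eq_abs, abs_of_pos hr₂pos, mul_one]
    rw [hn₁, hn₂]
    calc |r₁ - r₂| ≤ 4 * R ^ 2 / d₀ * Δ := habs
      _ ≤ (2 * R + 4 * R ^ 2 / d₀) * Δ := by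
          have h2RΔ : 0 ≤ 2 * R * Δ := by positivity
          linarith
      _ ≤ _ := hmain
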